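/- arXiv:1707.05839 — 4 statements merged into one kernel-verified Lean document; each statement's English description precedes it below -/
import Mathlib

section
/- For every n ≥ 4, the 2-token graph of the fan graph F_n is Hamiltonian. -/
open Finset SimpleGraph

/-- The `k`-token graph of a simple graph `G`: vertices are the `k`-subsets of
`V(G)`, with `A ~ B` iff the symmetric difference `A ∆ B` is an edge of `G`. -/
def tokenGraph {V : Type*} [DecidableEq V] (G : SimpleGraph V) (k : ℕ) :
    SimpleGraph {s : Finset V // s.card = k} where
  Adj A B := ∃ u v, G.Adj u v ∧ symmDiff A.1 B.1 = {u, v}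
  symm := by
    constructor
    rintro A B ⟨u, v, h, hs⟩
    exact ⟨u, v, h, by rwa [symmDiff_comm]⟩
  loopless := by
    constructor
    rintro A ⟨u, v, h, hs⟩
    rw [symmDiff_self] at hs
    have : u ∈ (⊥ : Finset V) := hs ▸ Finset.mem_insert_self u {v}
    simp at this

/-- The fan graph `F_n` on vertices `0, …, n-1`: vertices `0, …, n-2` form a path
and the apex `n-1` is adjacent to all of them. -/
def fanGraph (n : ℕ) : SimpleGraph (Fin n) :=
  SimpleGraph.fromRel (fun a b => (a.val + 1 = b.val ∧ b.val < n - 1) ∨ b.val = n - 1)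

namespace Stmt5Aux


/-- Build a walk from a chain list. -/
lemma exists_walk {V : Type*} (G : SimpleGraph V) :
    ∀ (l : List V) (a : V), List.Chain G.Adj a l →
      ∃ p : G.Walk a ((a :: l).getLast (by simp)), p.support = a :: l := by
  intro l
  induction l with
  | nil => intro a _; exact ⟨SimpleGraph.Walk.nil, rfl⟩
  | cons b t ih =>
    intro a h
    rw [List.Chain, List.isChain_cons_cons] at h
    obtain ⟨p, hp⟩ := ih b h.2
    have hX : ((a :: b :: t).getLast (by simp)) = ((b :: t).getLast (by simp)) :=
      List.getLast_cons (by simp)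
    refine ⟨(SimpleGraph.Walk.cons h.1 p).copy rfl hX.symm, ?_⟩
    simp [hp]

lemma edge_ends_not_mem {V : Type*} {G : SimpleGraph V} {a b : V} (p : G.Walk a b)
    (hp : p.IsPath) (hl : 2 ≤ p.length) : s(b, a) ∉ p.edges := by
  cases p with
  | nil => simp
  | cons h q =>
    rw [SimpleGraph.Walk.cons_isPath_iff] at hp
    intro hmem
    rw [SimpleGraph.Walk.edges_cons, List.mem_cons] at hmem
    rcases hmem with hmem | hmem
    · rw [Sym2.eq_iff] at hmem
      rcases hmem with ⟨h1, h2⟩ | ⟨h1, h2⟩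
      · exact hp.2 (h1 ▸ h2 ▸ q.end_mem_support)
      · subst h1
        have := (SimpleGraph.Walk.isPath_iff_eq_nil (p := q)).mp hp.1
        subst this
        simp at hl
    · exact hp.2 (q.snd_mem_support_of_mem_edges hmem)

lemma hamiltonian_of_list {V : Type*} [DecidableEq V] [Fintype V] (G : SimpleGraph V)
    (L : List V) (hlen : 3 ≤ L.length) (hchain : L.Chain' G.Adj)
    (hclose : ∀ x ∈ L.getLast?, ∀ y ∈ L.head?, G.Adj x y)
    (hnodup : L.Nodup) (hall : ∀ v, v ∈ L) : G.IsHamiltonian := by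
  intro _
  obtain ⟨a, l, rfl⟩ : ∃ a l, L = a :: l := by
    cases L with
    | nil => simp at hlen
    | cons a l => exact ⟨a, l, rfl⟩
  have hchain' : List.Chain G.Adj a l := hchain
  obtain ⟨p, hp⟩ := exists_walk G l a hchain'
  have hadj : G.Adj ((a :: l).getLast (by simp)) a := by
    apply hclose
    · rw [List.getLast?_eq_getLast (by simp)]; rfl
    · rfl
  have hpath : p.IsPath := by
    rw [SimpleGraph.Walk.isPath_def, hp]; exact hnodup
  have hplen : 2 ≤ p.length := by
    have := congrArg List.length hp
    rw [SimpleGraph.Walk.length_support] at this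
    simp only [List.length_cons] at this hlen
    omega
  refine ⟨_, SimpleGraph.Walk.cons hadj p, ?_⟩
  rw [SimpleGraph.Walk.isHamiltonianCycle_iff_isCycle_and_support_count_tail_eq_one]
  constructor
  · rw [SimpleGraph.Walk.cons_isCycle_iff]
    exact ⟨hpath, edge_ends_not_mem p hpath hplen⟩
  · intro v
    rw [SimpleGraph.Walk.support_cons]
    simp only [List.tail_cons]
    rw [hp]
    exact List.count_eq_one_of_mem hnodup (hall v)



/-- `col i d = [(i, i+d), (i, i+d-1), …, (i, i+1)]`. -/
def col (i : ℕ) : ℕ → List (ℕ × ℕ)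
  | 0 => []
  | d + 1 => (i, i + d + 1) :: col i d

/-- Blocks for `i, i+1, …, i+f-1`; block `t` is `col t (m - t)`. -/
def blocksAux (m : ℕ) : ℕ → ℕ → List (ℕ × ℕ)
  | _, 0 => []
  | i, f + 1 => col i (m - i) ++ blocksAux m (i + 1) f

/-- The Hamiltonian cycle order on pairs, for the fan with apex `m`. -/
def LL (m : ℕ) : List (ℕ × ℕ) := col 0 (m - 1) ++ (0, m) :: blocksAux m 1 (m - 1)

def fanRel (m a b : ℕ) : Prop :=
  (a + 1 = b ∧ b < m) ∨ (b + 1 = a ∧ a < m) ∨ (a = m ∧ b < m) ∨ (b = m ∧ a < m)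

def valid (m : ℕ) (p : ℕ × ℕ) : Prop := p.1 < p.2 ∧ p.2 ≤ m

def Rel (m : ℕ) (p q : ℕ × ℕ) : Prop := valid m p ∧ valid m q ∧
  ((p.1 = q.1 ∧ fanRel m p.2 q.2) ∨ (p.2 = q.1 ∧ fanRel m p.1 q.2) ∨
   (p.1 = q.2 ∧ fanRel m p.2 q.1) ∨ (p.2 = q.2 ∧ fanRel m p.1 q.1))

lemma mem_col (i : ℕ) : ∀ d p, p ∈ col i d ↔ p.1 = i ∧ i < p.2 ∧ p.2 ≤ i + d := by
  intro d
  induction d with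
  | zero => intro p; simp only [col, List.not_mem_nil, false_iff]; omega
  | succ d ih =>
    intro p
    simp only [col, List.mem_cons, ih, Prod.ext_iff]
    omega

lemma col_length (i : ℕ) : ∀ d, (col i d).length = d
  | 0 => rfl
  | d + 1 => by simp [col, col_length i d]

lemma col_head (i d : ℕ) : (col i (d + 1)).head? = some (i, i + d + 1) := rfl

lemma col_last (i : ℕ) : ∀ d, (col i (d + 1)).getLast? = some (i, i + 1)
  | 0 => rfl
  | d + 1 => by
    rw [show col i (d + 1 + 1) = (i, i + d + 1 + 1) :: (i, i + d + 1) :: col i d from rfl,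
      List.getLast?_cons_cons]
    exact col_last i d

lemma nodup_col (i : ℕ) : ∀ d, (col i d).Nodup
  | 0 => List.nodup_nil
  | d + 1 => by
    rw [col, List.nodup_cons]
    refine ⟨fun h => ?_, nodup_col i d⟩
    rw [mem_col] at h
    omega

lemma chain'_col (m i : ℕ) : ∀ d, i + d ≤ m → List.Chain' (Rel m) (col i d)
  | 0, _ => List.isChain_nil
  | 1, h => by simp [col, List.Chain']
  | d + 2, h => by
    rw [show col i (d + 2) = (i, i + d + 2) :: (i, i + d + 1) :: col i d from rfl,
      List.Chain', List.isChain_cons_cons]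
    refine ⟨?_, ?_⟩
    · simp only [Rel, valid, fanRel, true_and, and_true]; omega
    · exact chain'_col m i (d + 1) (by omega)

lemma mem_blocksAux (m : ℕ) : ∀ f i, i + f ≤ m →
    ∀ p, (p ∈ blocksAux m i f ↔ i ≤ p.1 ∧ p.1 < i + f ∧ p.1 < p.2 ∧ p.2 ≤ m) := by
  intro f
  induction f with
  | zero => intro i h p; simp [blocksAux]; omega
  | succ f ih =>
    intro i h p
    simp only [blocksAux, List.mem_append, mem_col, ih (i + 1) (by omega) p]
    omega

lemma nodup_blocksAux (m : ℕ) : ∀ f i, i + f ≤ m → (blocksAux m i f).Nodup := by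
  intro f
  induction f with
  | zero => intro i h; exact List.nodup_nil
  | succ f ih =>
    intro i h
    rw [blocksAux]
    refine List.Nodup.append (nodup_col i _) (ih (i + 1) (by omega)) ?_
    intro p hp hp'
    rw [mem_col] at hp
    rw [mem_blocksAux m f (i + 1) (by omega)] at hp'
    omega

lemma blocksAux_head (m i f : ℕ) (h : i + f + 1 = m) :
    (blocksAux m i (f + 1)).head? = some (i, m) := by
  rw [blocksAux]
  have h1 : m - i = f + 1 := by omega
  rw [h1, col, List.cons_append, List.head?_cons, Option.some.injEq, Prod.mk.injEq]
  exact ⟨rfl, by omega⟩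

lemma blocksAux_last (m : ℕ) : ∀ f i, 1 ≤ f → i + f = m →
    (blocksAux m i f).getLast? = some (m - 1, m) := by
  intro f
  induction f with
  | zero => omega
  | succ f ih =>
    intro i _ h
    rw [blocksAux]
    rcases Nat.eq_zero_or_pos f with hf | hf
    · subst hf
      have h1 : m - i = 1 := by omega
      rw [h1]
      simp only [col, blocksAux, List.append_nil, List.getLast?_singleton,
        Option.some.injEq, Prod.mk.injEq]
      omega
    · have h2 := ih (i + 1) hf (by omega)
      rw [List.getLast?_append_of_ne_nil _ (fun hnil => by rw [hnil] at h2; simp at h2)]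
      exact h2

lemma chain'_blocksAux (m : ℕ) : ∀ f i, 1 ≤ f → i + f = m →
    List.Chain' (Rel m) (blocksAux m i f) := by
  intro f
  induction f with
  | zero => omega
  | succ f ih =>
    intro i _ h
    rw [blocksAux]
    rcases Nat.eq_zero_or_pos f with hf | hf
    · subst hf
      simp only [blocksAux, List.append_nil]
      exact chain'_col m i (m - i) (by omega)
    · obtain ⟨f', rfl⟩ : ∃ f', f = f' + 1 := ⟨f - 1, by omega⟩
      rw [List.Chain', List.isChain_append]
      refine ⟨chain'_col m i (m - i) (by omega), ih (i + 1) hf (by omega), ?_⟩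
      intro x hx y hy
      have h1 : m - i = (m - i - 1) + 1 := by omega
      rw [h1, col_last] at hx
      rw [blocksAux_head m (i + 1) f' (by omega)] at hy
      simp only [Option.mem_some_iff] at hx hy
      subst hx; subst hy
      simp only [Rel, valid, fanRel, true_and, and_true]
      omega

lemma mem_LL (m : ℕ) (hm : 3 ≤ m) (p : ℕ × ℕ) :
    p ∈ LL m ↔ p.1 < p.2 ∧ p.2 ≤ m := by
  simp only [LL, List.mem_append, List.mem_cons, mem_col,
    mem_blocksAux m (m - 1) 1 (by omega), Prod.ext_iff]
  omega

lemma nodup_LL (m : ℕ) (hm : 3 ≤ m) : (LL m).Nodup := by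
  rw [LL]
  refine List.Nodup.append (nodup_col 0 _) ?_ ?_
  · rw [List.nodup_cons]
    refine ⟨fun h => ?_, nodup_blocksAux m (m - 1) 1 (by omega)⟩
    rw [mem_blocksAux m (m - 1) 1 (by omega)] at h
    omega
  · intro p hp hp'
    rw [mem_col] at hp
    rw [List.mem_cons] at hp'
    rcases hp' with h | h
    · subst h; omega
    · rw [mem_blocksAux m (m - 1) 1 (by omega)] at h
      omega

lemma length_LL (m : ℕ) (hm : 3 ≤ m) : 3 ≤ (LL m).length := by
  rw [LL, List.length_append, col_length]
  simp only [List.length_cons]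
  omega

lemma head_LL (m : ℕ) (hm : 3 ≤ m) : (LL m).head? = some (0, m - 1) := by
  rw [LL]
  have h1 : m - 1 = (m - 2) + 1 := by omega
  rw [h1, col, List.cons_append, List.head?_cons, Option.some.injEq, Prod.mk.injEq]
  exact ⟨rfl, by omega⟩

lemma last_LL (m : ℕ) (hm : 3 ≤ m) : (LL m).getLast? = some (m - 1, m) := by
  have h2 := blocksAux_last m (m - 1) 1 (by omega) (by omega)
  have hne : blocksAux m 1 (m - 1) ≠ [] := fun hnil => by rw [hnil] at h2; simp at h2
  rw [LL, List.getLast?_append_of_ne_nil _ (by simp),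
    show (0, m) :: blocksAux m 1 (m - 1) = [(0, m)] ++ blocksAux m 1 (m - 1) from rfl,
    List.getLast?_append_of_ne_nil _ hne]
  exact h2

lemma chain'_LL (m : ℕ) (hm : 3 ≤ m) : List.Chain' (Rel m) (LL m) := by
  rw [LL, List.Chain', List.isChain_append]
  refine ⟨chain'_col m 0 (m - 1) (by omega), ?_, ?_⟩
  · rw [List.isChain_cons]
    refine ⟨?_, chain'_blocksAux m (m - 1) 1 (by omega) (by omega)⟩
    intro y hy
    obtain ⟨f', hf'⟩ : ∃ f', m - 1 = f' + 1 := ⟨m - 2, by omega⟩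
    rw [hf', blocksAux_head m 1 f' (by omega)] at hy
    simp only [Option.mem_some_iff] at hy
    subst hy
    simp only [Rel, valid, fanRel, true_and, and_true]
    omega
  · intro x hx y hy
    have h1 : m - 1 = (m - 2) + 1 := by omega
    rw [h1, col_last] at hx
    rw [List.head?_cons] at hy
    simp only [Option.mem_some_iff] at hx hy
    subst hx; subst hy
    simp only [Rel, valid, fanRel, true_and, and_true]
    omega









def toV (n : ℕ) (hn : 2 ≤ n) (p : ℕ × ℕ) : {s : Finset (Fin n) // s.card = 2} :=
  if h : p.1 < p.2 ∧ p.2 < n then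
    ⟨{⟨p.1, h.1.trans h.2⟩, ⟨p.2, h.2⟩},
      Finset.card_pair (by simp only [ne_eq, Fin.mk.injEq]; omega)⟩
  else ⟨{⟨0, Nat.lt_of_lt_of_le Nat.zero_lt_two hn⟩, ⟨1, Nat.lt_of_lt_of_le Nat.one_lt_two hn⟩},
    Finset.card_pair (by simp [Fin.ext_iff])⟩

lemma toV_eq (n : ℕ) (hn : 2 ≤ n) (p : ℕ × ℕ) (h1 : p.1 < p.2) (h2 : p.2 < n) :
    toV n hn p = ⟨{⟨p.1, h1.trans h2⟩, ⟨p.2, h2⟩},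
      Finset.card_pair (by simp only [ne_eq, Fin.mk.injEq]; omega)⟩ := by
  rw [toV, dif_pos ⟨h1, h2⟩]

lemma symmDiff_pair {α : Type*} [DecidableEq α] {c u v : α} (hu : u ≠ c) (hv : v ≠ c)
    (huv : u ≠ v) : symmDiff ({c, u} : Finset α) {c, v} = {u, v} := by
  ext x
  simp only [Finset.mem_symmDiff, Finset.mem_insert, Finset.mem_singleton]
  constructor
  · rintro (⟨h1 | h1, h2⟩ | ⟨h1 | h1, h2⟩) <;> tauto
  · rintro (rfl | rfl)
    · exact Or.inl ⟨Or.inr rfl, by tauto⟩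
    · exact Or.inr ⟨Or.inr rfl, by tauto⟩

lemma fanRel_adj {m : ℕ} {a b : ℕ} (ha : a ≤ m) (hb : b ≤ m) (h : fanRel m a b) :
    (fanGraph (m + 1)).Adj ⟨a, by omega⟩ ⟨b, by omega⟩ := by
  rw [fanGraph, SimpleGraph.fromRel_adj]
  unfold fanRel at h
  simp only [ne_eq, Fin.mk.injEq, Nat.add_sub_cancel]
  omega

lemma rel_adj {m : ℕ} (hm : 2 ≤ m) {p q : ℕ × ℕ} (h : Rel m p q) :
    (tokenGraph (fanGraph (m + 1)) 2).Adj (toV (m + 1) (by omega) p)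
      (toV (m + 1) (by omega) q) := by
  obtain ⟨⟨hp1, hp2⟩, ⟨hq1, hq2⟩, hcase⟩ := h
  rw [toV_eq _ _ _ hp1 (by omega), toV_eq _ _ _ hq1 (by omega)]
  have hne : ∀ {a b : ℕ}, fanRel m a b → a ≠ b := by
    intro a b hab; unfold fanRel at hab; omega
  rcases hcase with ⟨he, hf⟩ | ⟨he, hf⟩ | ⟨he, hf⟩ | ⟨he, hf⟩
  · -- p.1 = q.1 common; symmDiff {c,p.2} {c,q.2} = {p.2, q.2}
    refine ⟨⟨p.2, by omega⟩, ⟨q.2, by omega⟩, fanRel_adj (by omega) (by omega) hf, ?_⟩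
    show symmDiff ({⟨p.1, _⟩, ⟨p.2, _⟩} : Finset (Fin (m+1))) {⟨q.1, _⟩, ⟨q.2, _⟩} = _
    simp only [← he]
    exact symmDiff_pair (by simp [Fin.ext_iff]; omega) (by simp [Fin.ext_iff]; omega)
      (by simp [Fin.ext_iff]; exact fun hh => hne hf hh)
  · -- p.2 = q.1 common
    refine ⟨⟨p.1, by omega⟩, ⟨q.2, by omega⟩, fanRel_adj (by omega) (by omega) hf, ?_⟩
    show symmDiff ({⟨p.1, _⟩, ⟨p.2, _⟩} : Finset (Fin (m+1))) {⟨q.1, _⟩, ⟨q.2, _⟩} = _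
    rw [Finset.pair_comm]
    simp only [← he]
    exact symmDiff_pair (by simp [Fin.ext_iff]; omega) (by simp [Fin.ext_iff]; omega)
      (by simp [Fin.ext_iff]; exact fun hh => hne hf hh)
  · -- p.1 = q.2 common
    refine ⟨⟨p.2, by omega⟩, ⟨q.1, by omega⟩, fanRel_adj (by omega) (by omega) hf, ?_⟩
    show symmDiff ({⟨p.1, _⟩, ⟨p.2, _⟩} : Finset (Fin (m+1))) {⟨q.1, _⟩, ⟨q.2, _⟩} = _
    rw [Finset.pair_comm (⟨q.1, _⟩ : Fin (m+1))]
    simp only [← he]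
    exact symmDiff_pair (by simp [Fin.ext_iff]; omega) (by simp [Fin.ext_iff]; omega)
      (by simp [Fin.ext_iff]; exact fun hh => hne hf hh)
  · -- p.2 = q.2 common
    refine ⟨⟨p.1, by omega⟩, ⟨q.1, by omega⟩, fanRel_adj (by omega) (by omega) hf, ?_⟩
    show symmDiff ({⟨p.1, _⟩, ⟨p.2, _⟩} : Finset (Fin (m+1))) {⟨q.1, _⟩, ⟨q.2, _⟩} = _
    rw [Finset.pair_comm (⟨p.1, _⟩ : Fin (m+1)), Finset.pair_comm (⟨q.1, _⟩ : Fin (m+1))]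
    simp only [← he]
    exact symmDiff_pair (by simp [Fin.ext_iff]; omega) (by simp [Fin.ext_iff]; omega)
      (by simp [Fin.ext_iff]; exact fun hh => hne hf hh)

lemma toV_inj {n : ℕ} (hn : 2 ≤ n) {p q : ℕ × ℕ} (hp1 : p.1 < p.2) (hp2 : p.2 < n)
    (hq1 : q.1 < q.2) (hq2 : q.2 < n) (h : toV n hn p = toV n hn q) : p = q := by
  rw [toV_eq _ _ _ hp1 hp2, toV_eq _ _ _ hq1 hq2, Subtype.mk.injEq] at h
  have h1 : (⟨p.1, by omega⟩ : Fin n) ∈ ({⟨q.1, by omega⟩, ⟨q.2, hq2⟩} : Finset (Fin n)) := by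
    rw [← h]; exact Finset.mem_insert_self _ _
  have h2 : (⟨p.2, by omega⟩ : Fin n) ∈ ({⟨q.1, by omega⟩, ⟨q.2, hq2⟩} : Finset (Fin n)) := by
    rw [← h]; exact Finset.mem_insert_of_mem (Finset.mem_singleton_self _)
  have h3 : (⟨q.1, by omega⟩ : Fin n) ∈ ({⟨p.1, by omega⟩, ⟨p.2, hp2⟩} : Finset (Fin n)) := by
    rw [h]; exact Finset.mem_insert_self _ _
  simp only [Finset.mem_insert, Finset.mem_singleton, Fin.mk.injEq] at h1 h2 h3
  have : p.1 = q.1 ∧ p.2 = q.2 := by omega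
  exact Prod.ext this.1 this.2


end Stmt5Aux

open Stmt5Aux in
/-- For every `n ≥ 4`, the 2-token graph of the fan graph `F_n` is Hamiltonian. -/
theorem stmt_5 (n : ℕ) (hn : 4 ≤ n) :
    (tokenGraph (fanGraph n) 2).IsHamiltonian := by
  obtain ⟨m, rfl⟩ : ∃ m, n = m + 1 := ⟨n - 1, by omega⟩
  have hm : 3 ≤ m := by omega
  have hn2 : 2 ≤ m + 1 := by omega
  apply hamiltonian_of_list _ ((LL m).map (toV (m + 1) hn2))
  · rw [List.length_map]; exact length_LL m hm
  · rw [List.Chain', List.isChain_map]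
    exact (chain'_LL m hm).imp (fun a b hab => rel_adj (by omega) hab)
  · intro x hx y hy
    rw [List.getLast?_map, last_LL m hm] at hx
    rw [List.head?_map, head_LL m hm] at hy
    simp only [Option.map_some, Option.mem_some_iff] at hx hy
    subst hx; subst hy
    exact rel_adj (by omega) (by simp only [Stmt5Aux.Rel, Stmt5Aux.valid, Stmt5Aux.fanRel, true_and, and_true]; omega)
  · refine List.Nodup.map_on ?_ (nodup_LL m hm)
    intro p hp q hq h
    rw [mem_LL m hm] at hp hq
    exact toV_inj hn2 hp.1 (by omega) hq.1 (by omega) h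
  · rintro ⟨s, hs⟩
    obtain ⟨x, y, hxy, rfl⟩ := Finset.card_eq_two.mp hs
    rw [List.mem_map]
    rcases lt_or_gt_of_ne hxy with hlt | hlt
    · refine ⟨(x.val, y.val), ?_, ?_⟩
      · rw [mem_LL m hm]
        exact ⟨hlt, by omega⟩
      · rw [toV_eq _ _ _ hlt y.isLt]
    · refine ⟨(y.val, x.val), ?_, ?_⟩
      · rw [mem_LL m hm]
        exact ⟨hlt, by omega⟩
      · rw [toV_eq _ _ _ hlt x.isLt]
        exact Subtype.ext (Finset.pair_comm _ _)
end

section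
/- Fix n ≥ 3 and 2 ≤ k ≤ n−1 with n − k ≥ 1. For each 1 ≤ i ≤ n−k, the subgraph S_i of F_n^{(k)} induced by the k-subsets whose minimum element is i is isomorphic to the (k−1)-token graph of the fan graph F_{n−i}. -/
open Finset SimpleGraph

def shiftEmb (n i : ℕ) (h : i + 1 ≤ n) : Fin (n - (i + 1)) ↪ Fin n :=
  ⟨fun x => ⟨x.val + (i + 1), by omega⟩, by
    intro a b hab
    simp only [Fin.mk.injEq, Fin.ext_iff] at hab ⊢
    omega⟩

lemma shiftEmb_val (n i : ℕ) (h : i + 1 ≤ n) (x : Fin (n - (i + 1))) :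
    (shiftEmb n i h x).val = x.val + (i + 1) := rfl

lemma fan_adj_shift (n i : ℕ) (h : i + 2 < n) (a b : Fin (n - (i + 1))) :
    (fanGraph n).Adj (shiftEmb n i (by omega) a) (shiftEmb n i (by omega) b) ↔
      (fanGraph (n - (i + 1))).Adj a b := by
  have ha := a.isLt; have hb := b.isLt
  simp only [fanGraph, fromRel_adj, shiftEmb_val, Function.Embedding.coeFn_mk, ne_eq,
    Fin.ext_iff]
  omega

lemma symmDiff_insert_insert {α : Type*} [DecidableEq α] {i : α} {X Y : Finset α}
    (hX : i ∉ X) (hY : i ∉ Y) :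
    symmDiff (insert i X) (insert i Y) = symmDiff X Y := by
  ext x
  by_cases hx : x = i
  · subst hx
    simp [Finset.mem_symmDiff, hX, hY]
  · simp [Finset.mem_symmDiff, Finset.mem_insert, hx]

lemma mapSymmDiffEmb {α β : Type*} [DecidableEq α] [DecidableEq β] (f : α ↪ β)
    (s t : Finset α) : symmDiff (s.map f) (t.map f) = (symmDiff s t).map f := by
  simp only [Finset.map_eq_image]
  exact (Finset.image_symmDiff s t f.injective).symm

/-- The subgraph of `F_n^{(k)}` induced by the `k`-subsets with minimum element `i`
(paper index `i+1`, so `1 ≤ i+1 ≤ n-k`) is isomorphic to `F_{n-(i+1)}^{(k-1)}`. -/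
theorem stmt_6 (n k : ℕ) (hn : 3 ≤ n) (hk1 : 2 ≤ k) (hk2 : k ≤ n - 1)
    (i : Fin n) (hi : i.val + k < n) :
    Nonempty
      ((SimpleGraph.induce
          {A : {s : Finset (Fin n) // s.card = k} | A.1.min = (i : WithBot (Fin n))}
          (tokenGraph (fanGraph n) k)) ≃g
        tokenGraph (fanGraph (n - (i.val + 1))) (k - 1)) := by
  have him : i.val + 1 ≤ n := by omega
  have h2 : i.val + 2 < n := by omega
  let e : Fin (n - (i.val + 1)) ↪ Fin n := shiftEmb n i.val him
  have he_gt : ∀ a : Fin (n - (i.val + 1)), (i : Fin n) < e a := by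
    intro a
    simp only [e, shiftEmb_val, Function.Embedding.coeFn_mk, Fin.lt_def]
    omega
  have hiNotMap : ∀ S : Finset (Fin (n - (i.val + 1))), (i : Fin n) ∉ S.map e := by
    intro S hmem
    obtain ⟨a, _, ha⟩ := Finset.mem_map.mp hmem
    exact absurd (ha ▸ he_gt a) (lt_irrefl _)
  have hrange : ∀ (A : Finset (Fin n)), A.min = (i : WithBot (Fin n)) →
      ((A.erase i).preimage e e.injective.injOn).map e = A.erase i := by
    intro A hA
    ext x
    simp only [Finset.mem_map, Finset.mem_preimage]
    constructor
    · rintro ⟨a, ha, rfl⟩; exact ha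
    · intro hx
      have hxi : x ≠ i := Finset.ne_of_mem_erase hx
      have hxA : x ∈ A := Finset.mem_of_mem_erase hx
      have hge : (i : Fin n) ≤ x := Finset.min_le_of_eq hxA hA
      have hlt : i.val < x.val :=
        lt_of_le_of_ne (Fin.le_def.mp hge) (fun h => hxi (Fin.ext h.symm))
      have hxlt := x.isLt
      have hxe : e ⟨x.val - (i.val + 1), by omega⟩ = x := by
        simp only [e, Fin.ext_iff, shiftEmb_val, Function.Embedding.coeFn_mk]
        omega
      exact ⟨⟨x.val - (i.val + 1), by omega⟩, by rw [hxe]; exact hx, hxe⟩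
  let Φ : {s : Finset (Fin (n - (i.val + 1))) // s.card = k - 1} →
      {A : {s : Finset (Fin n) // s.card = k} // A.1.min = (i : WithBot (Fin n))} := fun S =>
    ⟨⟨insert i (S.1.map e), by
        rw [Finset.card_insert_of_notMem (hiNotMap S.1), Finset.card_map, S.2]; omega⟩, by
      apply le_antisymm
      · exact Finset.min_le (Finset.mem_insert_self _ _)
      · apply Finset.le_min
        intro a ha
        rcases Finset.mem_insert.mp ha with h | h
        · subst h; exact le_rfl
        · obtain ⟨b, _, hb⟩ := Finset.mem_map.mp h
          exact WithTop.coe_le_coe.mpr (le_of_lt (hb ▸ he_gt b))⟩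
  let Ψ : {A : {s : Finset (Fin n) // s.card = k} // A.1.min = (i : WithBot (Fin n))} →
      {s : Finset (Fin (n - (i.val + 1))) // s.card = k - 1} := fun A =>
    ⟨(A.1.1.erase i).preimage e e.injective.injOn, by
      have h1 := congrArg Finset.card (hrange A.1.1 A.2)
      rw [Finset.card_map, Finset.card_erase_of_mem (Finset.mem_of_min A.2), A.1.2] at h1
      exact h1⟩
  have left_inv : Function.LeftInverse Ψ Φ := by
    intro S
    apply Subtype.ext
    show ((insert (i : Fin n) (S.1.map e)).erase i).preimage e e.injective.injOn = S.1
    rw [Finset.erase_insert (hiNotMap S.1), Finset.preimage_map]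
  have right_inv : Function.RightInverse Ψ Φ := by
    intro A
    apply Subtype.ext; apply Subtype.ext
    show insert (i : Fin n) (((A.1.1.erase i).preimage e e.injective.injOn).map e) = A.1.1
    rw [hrange A.1.1 A.2, Finset.insert_erase (Finset.mem_of_min A.2)]
  let EQ : {s : Finset (Fin (n - (i.val + 1))) // s.card = k - 1} ≃
      {A : {s : Finset (Fin n) // s.card = k} // A.1.min = (i : WithBot (Fin n))} :=
    ⟨Φ, Ψ, left_inv, right_inv⟩
  refine ⟨(RelIso.mk EQ ?_).symm⟩
  intro S T
  show (∃ u v, (fanGraph n).Adj u v ∧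
      symmDiff (insert (i : Fin n) (S.1.map e)) (insert (i : Fin n) (T.1.map e)) = {u, v}) ↔ _
  rw [symmDiff_insert_insert (hiNotMap S.1) (hiNotMap T.1), mapSymmDiffEmb]
  constructor
  · rintro ⟨u, v, huv, hX⟩
    have hu : u ∈ (symmDiff S.1 T.1).map e := hX ▸ Finset.mem_insert_self u {v}
    have hv : v ∈ (symmDiff S.1 T.1).map e := hX ▸ (by simp)
    obtain ⟨a, ha, rfl⟩ := Finset.mem_map.mp hu
    obtain ⟨b, hb, rfl⟩ := Finset.mem_map.mp hv
    refine ⟨a, b, (fan_adj_shift n i.val h2 a b).mp huv, ?_⟩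
    apply Finset.map_injective e
    rw [hX, Finset.map_insert, Finset.map_singleton]
  · rintro ⟨u, v, huv, hX⟩
    exact ⟨e u, e v, (fan_adj_shift n i.val h2 u v).mpr huv,
      by rw [hX, Finset.map_insert, Finset.map_singleton]⟩
end

section
/- For all n ≥ 3 and 1 ≤ k ≤ n−1, the Johnson graph J(n,k) is Hamiltonian. -/
open Finset SimpleGraph

/-- The Johnson graph `J(n,k)`: vertices are the `k`-subsets of an `n`-set,
adjacent iff their intersection has `k-1` elements. -/
def johnsonGraph (n k : ℕ) : SimpleGraph {s : Finset (Fin n) // s.card = k} where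
  Adj A B := A ≠ B ∧ (A.1 ∩ B.1).card = k - 1
  symm := by
    constructor
    rintro A B ⟨h1, h2⟩
    exact ⟨h1.symm, by rwa [Finset.inter_comm]⟩
  loopless := by constructor; rintro A ⟨h1, _⟩; exact h1 rfl

lemma walk_of_chain {V : Type*} {G : SimpleGraph V} :
    ∀ (a : V) (l : List V), List.Chain G.Adj a l →
    ∃ w : G.Walk a ((a :: l).getLast (List.cons_ne_nil a l)), w.support = a :: l := by
  intro a l
  induction l generalizing a with
  | nil => intro _; exact ⟨Walk.nil, rfl⟩
  | cons b l ih =>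
    intro h
    simp only [List.Chain, List.isChain_cons_cons] at h
    obtain ⟨w', hw'⟩ := ih b h.2
    rw [List.getLast_cons (List.cons_ne_nil b l)]
    exact ⟨Walk.cons h.1 w', by simp [hw']⟩

lemma notmem_edge_of_path {V : Type*} {G : SimpleGraph V} {a b : V} (w : G.Walk a b)
    (hp : w.IsPath) (hlen : 2 ≤ w.length) : s(a, b) ∉ w.edges := by
  cases w with
  | nil => simp at hlen
  | @cons _ c _ hadj w' =>
    intro hmem
    simp only [Walk.edges_cons, List.mem_cons] at hmem
    have hnd := hp.support_nodup
    simp only [Walk.support_cons, List.nodup_cons] at hnd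
    rcases hmem with hmem | hmem
    · rw [Sym2.eq_iff] at hmem
      rcases hmem with ⟨-, rfl⟩ | ⟨rfl, rfl⟩
      · have hp' : w'.IsPath := by
          have := hp
          rw [Walk.cons_isPath_iff] at this
          exact this.1
        rw [Walk.isPath_iff_eq_nil] at hp'
        subst hp'
        simp [Walk.length_cons] at hlen
      · exact (G.irrefl hadj)
    · exact hnd.1 (Walk.fst_mem_support_of_mem_edges w' hmem)

lemma ham_of_list {V : Type*} [DecidableEq V] [Fintype V] {G : SimpleGraph V}
    (a : V) (t : List V) (hnd : (a :: t).Nodup) (hall : ∀ v, v ∈ a :: t)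
    (h3 : 3 ≤ (a :: t).length) (hch : List.Chain G.Adj a t)
    (hcyc : G.Adj a ((a :: t).getLast (List.cons_ne_nil a t))) :
    G.IsHamiltonian := by
  intro _
  obtain ⟨w, hw⟩ := walk_of_chain a t hch
  have hwpath : w.IsPath := Walk.IsPath.mk' (by rw [hw]; exact hnd)
  have hlen : 2 ≤ w.length := by
    have : w.support.length = w.length + 1 := Walk.length_support w
    rw [hw] at this
    simp only [List.length_cons] at this h3
    omega
  refine ⟨a, Walk.cons hcyc w.reverse, ?_⟩
  rw [Walk.isHamiltonianCycle_iff_isCycle_and_support_count_tail_eq_one]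
  constructor
  · rw [Walk.cons_isCycle_iff]
    refine ⟨hwpath.reverse, ?_⟩
    rw [Walk.edges_reverse, List.mem_reverse]
    exact notmem_edge_of_path w hwpath hlen
  · intro v
    have hsupp : (Walk.cons hcyc w.reverse).support.tail = (a :: t).reverse := by
      simp [Walk.support_reverse, hw]
    rw [hsupp]
    refine List.count_eq_one_of_mem ?_ ?_
    · rw [List.nodup_reverse]; exact hnd
    · rw [List.mem_reverse]; exact hall v

def RD : ℕ → ℕ → List (Finset ℕ)
  | _, 0 => [∅]
  | 0, _+1 => []
  | n+1, k+1 => RD n (k+1) ++ ((RD n k).reverse.map (insert n))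

@[simp] lemma RD_zero (n : ℕ) : RD n 0 = [∅] := by cases n <;> rfl
lemma RD_succ (n k : ℕ) : RD (n+1) (k+1) = RD n (k+1) ++ ((RD n k).reverse.map (insert n)) := rfl

lemma mem_RD : ∀ {n k : ℕ} {s : Finset ℕ}, s ∈ RD n k → s ⊆ range n ∧ s.card = k := by
  intro n
  induction n with
  | zero =>
    intro k s hs
    cases k with
    | zero => simp at hs; simp [hs]
    | succ k => simp [RD] at hs
  | succ n ih =>
    intro k s hs
    cases k with
    | zero => simp at hs; simp [hs]
    | succ k =>
      rw [RD_succ, List.mem_append] at hs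
      rcases hs with hs | hs
      · obtain ⟨h1, h2⟩ := ih hs
        exact ⟨h1.trans (range_subset_range.mpr (Nat.le_succ n)), h2⟩
      · simp only [List.mem_map, List.mem_reverse] at hs
        obtain ⟨t, ht, rfl⟩ := hs
        obtain ⟨h1, h2⟩ := ih ht
        have hn : n ∉ t := fun h => by simpa using h1 h
        constructor
        · intro x hx
          rcases mem_insert.mp hx with rfl | hx
          · simp
          · exact range_subset_range.mpr (Nat.le_succ n) (h1 hx)
        · rw [card_insert_of_notMem hn, h2]

lemma RD_nil : ∀ {n k : ℕ}, n < k → RD n k = [] := by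
  intro n
  induction n with
  | zero => intro k h; cases k with
    | zero => omega
    | succ k => rfl
  | succ n ih =>
    intro k h
    cases k with
    | zero => omega
    | succ k => rw [RD_succ, ih (by omega), ih (by omega)]; rfl

lemma RD_ne_nil : ∀ {n k : ℕ}, k ≤ n → RD n k ≠ [] := by
  intro n
  induction n with
  | zero => intro k h; interval_cases k; simp
  | succ n ih =>
    intro k h
    cases k with
    | zero => simp
    | succ k =>
      rw [RD_succ]
      intro hcon
      rcases List.append_eq_nil_iff.mp hcon with ⟨-, h2⟩
      have := ih (show k ≤ n by omega)
      simp [this] at h2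

lemma RD_complete : ∀ {n k : ℕ} {s : Finset ℕ}, s ⊆ range n → s.card = k → s ∈ RD n k := by
  intro n
  induction n with
  | zero =>
    intro k s h1 h2
    simp only [range_zero, subset_empty] at h1
    subst h1
    simp at h2
    subst h2
    simp
  | succ n ih =>
    intro k s h1 h2
    cases k with
    | zero => simp at h2; simp [h2]
    | succ k =>
      rw [RD_succ, List.mem_append]
      by_cases hn : n ∈ s
      · right
        simp only [List.mem_map, List.mem_reverse]
        refine ⟨s.erase n, ih ?_ ?_, ?_⟩
        · intro x hx
          have := h1 (mem_of_mem_erase hx)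
          have hne := ne_of_mem_erase hx
          simp only [mem_range] at this ⊢
          omega
        · rw [card_erase_of_mem hn, h2]; rfl
        · exact insert_erase hn
      · left
        apply ih ?_ h2
        intro x hx
        have := h1 hx
        simp only [mem_range] at this ⊢
        rcases Nat.lt_succ_iff_lt_or_eq.mp this with h | rfl
        · exact h
        · exact absurd hx hn

lemma RD_nodup : ∀ (n k : ℕ), (RD n k).Nodup := by
  intro n
  induction n with
  | zero => intro k; cases k <;> simp [RD]
  | succ n ih =>
    intro k
    cases k with
    | zero => simp
    | succ k =>
      rw [RD_succ]
      apply List.Nodup.append (ih (k+1))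
      · apply List.Nodup.map_on ?_ (List.nodup_reverse.mpr (ih k))
        intro x hx y hy hxy
        rw [List.mem_reverse] at hx hy
        have hxn : n ∉ x := fun h => by simpa using (mem_RD hx).1 h
        have hyn : n ∉ y := fun h => by simpa using (mem_RD hy).1 h
        have := congrArg (Finset.erase · n) hxy
        simpa [erase_insert hxn, erase_insert hyn] using this
      · intro s hs hs'
        simp only [List.mem_map, List.mem_reverse] at hs'
        obtain ⟨t, ht, rfl⟩ := hs'
        have : n ∈ insert n t := mem_insert_self n t
        have := (mem_RD hs).1 this
        simp at this


lemma RD_head_getLast : ∀ n : ℕ,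
    (∀ k, k ≤ n → (RD n k).head? = some (range k)) ∧
    (∀ k, 1 ≤ k → k ≤ n → (RD n k).getLast? = some (insert (n-1) (range (k-1)))) := by
  intro n
  induction n with
  | zero =>
    constructor
    · intro k h; interval_cases k; simp
    · intro k h1 h2; omega
  | succ n ih =>
    obtain ⟨ihh, ihl⟩ := ih
    have hlast : ∀ k, 1 ≤ k → k ≤ n + 1 →
        (RD (n+1) k).getLast? = some (insert n (range (k-1))) := by
      intro k h1 h2
      obtain ⟨k, rfl⟩ := Nat.exists_eq_add_of_le h1
      rw [Nat.add_comm 1 k, RD_succ]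
      have hne : ((RD n k).reverse.map (insert n)) ≠ [] := by
        simp [RD_ne_nil (show k ≤ n by omega)]
      rw [List.getLast?_append, List.getLast?_map, List.getLast?_reverse,
        ihh k (by omega)]
      simp
    refine ⟨?_, fun k h1 h2 => (by simpa using hlast k h1 h2)⟩
    intro k hk
    cases k with
    | zero => simp
    | succ k =>
      rw [RD_succ]
      rcases Nat.lt_or_ge k n with hlt | hge
      · rw [List.head?_append_of_ne_nil _ (RD_ne_nil hlt)]
        exact ihh _ hlt
      · have hkn : k = n := by omega
        subst hkn
        rw [RD_nil (by omega), List.nil_append, List.head?_map, List.head?_reverse]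
        cases k with
        | zero => simp
        | succ m =>
          rw [ihl (m+1) (by omega) (le_refl _)]
          simp only [Option.map_some, Nat.add_sub_cancel]
          rw [← range_add_one, ← range_add_one]

lemma RD_head {n k : ℕ} (h : k ≤ n) : (RD n k).head? = some (range k) :=
  (RD_head_getLast n).1 k h

lemma RD_getLast {n k : ℕ} (h1 : 1 ≤ k) (h2 : k ≤ n) :
    (RD n k).getLast? = some (insert (n-1) (range (k-1))) :=
  (RD_head_getLast n).2 k h1 h2

def Jadj (k : ℕ) (s t : Finset ℕ) : Prop := s ≠ t ∧ (s ∩ t).card = k - 1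

lemma chain'_imp_mem {α : Type*} {R S : α → α → Prop} :
    ∀ {l : List α}, l.Chain' R → (∀ x ∈ l, ∀ y ∈ l, R x y → S x y) → l.Chain' S := by
  intro l
  induction l with
  | nil => intro _ _; exact List.isChain_nil
  | cons x l ih =>
    intro h himp
    simp only [List.Chain', List.isChain_cons] at h ⊢
    refine ⟨?_, ih h.2 fun a ha b hb => himp a (by simp [ha]) b (by simp [hb])⟩
    intro y hy
    exact himp x (by simp) y (by simp [List.mem_of_mem_head? hy]) (h.1 y hy)

lemma Jadj_insert {n k : ℕ} {s t : Finset ℕ} (hs : s ⊆ range n) (ht : t ⊆ range n)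
    (hcs : s.card = k) (hct : t.card = k) (h : Jadj k s t) : Jadj (k+1) (insert n s) (insert n t) := by
  have hk1 : 1 ≤ k := by
    rcases Nat.eq_zero_or_pos k with rfl | h1
    · exfalso
      apply h.1
      have h2 := h.2
      simp only [Nat.zero_sub] at h2
      rw [card_eq_zero.mp hcs, card_eq_zero.mp hct]
    · exact h1
  have hns : n ∉ s := fun hc => by simpa using hs hc
  have hnt : n ∉ t := fun hc => by simpa using ht hc
  constructor
  · intro hc
    apply h.1
    have := congrArg (Finset.erase · n) hc
    simpa [erase_insert hns, erase_insert hnt] using this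
  · have : insert n s ∩ insert n t = insert n (s ∩ t) := by
      ext x; simp [mem_insert, mem_inter]; tauto
    rw [this, card_insert_of_notMem (fun hc => hns (mem_inter.mp hc).1), h.2]
    omega

lemma Jadj_symm {k : ℕ} {s t : Finset ℕ} (h : Jadj k s t) : Jadj k t s :=
  ⟨h.1.symm, by rw [inter_comm]; exact h.2⟩

lemma RD_chain : ∀ (n k : ℕ), (RD n k).Chain' (Jadj k) := by
  intro n
  induction n with
  | zero => intro k; cases k <;> simp [RD, List.Chain']
  | succ n ih =>
    intro k
    cases k with
    | zero => simp [List.Chain']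
    | succ k =>
      simp only [RD_succ, List.Chain', List.isChain_append]
      refine ⟨ih (k+1), ?_, ?_⟩
      · rw [List.isChain_map, List.isChain_reverse]
        apply chain'_imp_mem (ih k)
        intro x hx y hy hxy
        exact Jadj_insert (mem_RD hy).1 (mem_RD hx).1 (mem_RD hy).2 (mem_RD hx).2
          (Jadj_symm hxy)
      · intro x hx y hy
        rcases Nat.lt_or_ge n (k+1) with hn | hn
        · rw [RD_nil hn] at hx; simp at hx
        -- k+1 ≤ n
        rw [RD_getLast (by omega) hn] at hx
        simp only [Option.mem_def, Option.some_inj] at hx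
        subst hx
        rw [List.head?_map, List.head?_reverse] at hy
        cases k with
        | zero =>
          rw [RD_zero] at hy
          simp only [List.getLast?_singleton, Option.map_some, Option.mem_def,
            Option.some_inj] at hy
          subst hy
          simp only [Nat.add_sub_cancel]
          constructor
          · intro hc
            have : (n:ℕ) ∈ insert (n-1) (range 0) := by rw [hc]; simp
            simp only [range_zero, mem_insert, notMem_empty, or_false] at this
            omega
          · rw [range_zero, LawfulSingleton.insert_empty_eq, LawfulSingleton.insert_empty_eq,
              singleton_inter_of_notMem (by simp only [mem_singleton]; omega),
              card_empty]
        | succ m =>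
          rw [RD_getLast (by omega) (by omega)] at hy
          simp only [Option.map_some, Option.mem_def, Option.some_inj] at hy
          subst hy
          simp only [Nat.add_sub_cancel]
          constructor
          · intro hc
            have : (n:ℕ) ∈ insert (n-1) (range (m+1)) := by
              rw [hc]; simp
            simp only [mem_insert, mem_range] at this
            omega
          · have hint : insert (n-1) (range (m+1)) ∩
                insert n (insert (n-1) (range m)) =
                insert (n-1) (range m) := by
              ext z
              simp only [mem_inter, mem_insert, mem_range]
              omega
            rw [hint, card_insert_of_notMem (by simp only [mem_range]; omega),
              card_range]
            omega

lemma RD_cyc {n k : ℕ} (h1 : 1 ≤ k) (h2 : k ≤ n - 1) (hn : 1 ≤ n) :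
    Jadj k (range k) (insert (n-1) (range (k-1))) := by
  constructor
  · intro hc
    have : (n-1 : ℕ) ∈ range k := by rw [hc]; simp
    simp only [mem_range] at this
    omega
  · have hint : range k ∩ insert (n-1) (range (k-1)) = range (k-1) := by
      ext z
      simp only [mem_inter, mem_insert, mem_range]
      omega
    rw [hint, card_range]

lemma RD_length : ∀ (n k : ℕ), (RD n k).length = n.choose k := by
  intro n
  induction n with
  | zero => intro k; cases k <;> simp [RD]
  | succ n ih =>
    intro k
    cases k with
    | zero => simp
    | succ k =>
      rw [RD_succ, List.length_append, List.length_map, List.length_reverse,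
        ih, ih, Nat.choose_succ_succ]
      simp only [Nat.succ_eq_add_one]
      omega

lemma le_choose : ∀ n k : ℕ, 1 ≤ k → k ≤ n - 1 → n ≤ n.choose k := by
  intro n
  induction n with
  | zero => intro k h1 h2; omega
  | succ n ih =>
    intro k h1 h2
    rcases Nat.lt_or_ge k n with hk | hk
    · cases k with
      | zero => omega
      | succ m =>
        rw [Nat.choose_succ_succ]
        have hpos : 0 < n.choose m := Nat.choose_pos (by omega)
        have := ih (m+1) (by omega) (by omega)
        simp only [Nat.succ_eq_add_one] at *
        omega
    · have hkn : k = n := by omega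
      subst hkn
      rw [Nat.choose_succ_self_right]

section D
variable {V : Type*} {G : SimpleGraph V}

lemma ham_of_list' [DecidableEq V] [Fintype V]
    (l : List V) (hnd : l.Nodup) (hall : ∀ v, v ∈ l) (h3 : 3 ≤ l.length)
    (hch : l.Chain' G.Adj) (hcyc : ∀ x ∈ l.head?, ∀ y ∈ l.getLast?, G.Adj x y) :
    G.IsHamiltonian := by
  match l with
  | [] => simp at h3
  | a :: t =>
    apply ham_of_list a t hnd hall h3 hch
    refine hcyc a rfl ((a :: t).getLast (List.cons_ne_nil a t)) ?_
    rw [List.getLast?_eq_getLast (List.cons_ne_nil a t)]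
    rfl
end D

def toVert (n k : ℕ) (hk : k ≤ n) (s : Finset ℕ) : {x : Finset (Fin n) // x.card = k} :=
  if h : s ⊆ range n ∧ s.card = k then
    ⟨s.attachFin (fun m hm => mem_range.mp (h.1 hm)), by rw [card_attachFin]; exact h.2⟩
  else
    ⟨(range k).attachFin (fun m hm => lt_of_lt_of_le (mem_range.mp hm) hk),
      by rw [card_attachFin, card_range]⟩

lemma toVert_mem {n k : ℕ} {hk : k ≤ n} {s : Finset ℕ} (h : s ⊆ range n ∧ s.card = k)
    (a : Fin n) : a ∈ (toVert n k hk s).1 ↔ a.val ∈ s := by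
  rw [toVert, dif_pos h]
  exact mem_attachFin _

lemma toVert_inj {n k : ℕ} {hk : k ≤ n} {s t : Finset ℕ} (hs : s ⊆ range n ∧ s.card = k)
    (ht : t ⊆ range n ∧ t.card = k) (h : toVert n k hk s = toVert n k hk t) : s = t := by
  ext x
  constructor
  · intro hx
    have hlt : x < n := mem_range.mp (hs.1 hx)
    have := (toVert_mem (hk := hk) hs ⟨x, hlt⟩).mpr hx
    rw [h] at this
    exact (toVert_mem ht ⟨x, hlt⟩).mp this
  · intro hx
    have hlt : x < n := mem_range.mp (ht.1 hx)
    have := (toVert_mem (hk := hk) ht ⟨x, hlt⟩).mpr hx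
    rw [← h] at this
    exact (toVert_mem hs ⟨x, hlt⟩).mp this

lemma toVert_adj {n k : ℕ} {hk : k ≤ n} {s t : Finset ℕ} (hs : s ⊆ range n ∧ s.card = k)
    (ht : t ⊆ range n ∧ t.card = k) (h : Jadj k s t) :
    (johnsonGraph n k).Adj (toVert n k hk s) (toVert n k hk t) := by
  constructor
  · intro hc
    exact h.1 (toVert_inj hs ht hc)
  · have hint : (toVert n k hk s).1 ∩ (toVert n k hk t).1 =
        (s ∩ t).attachFin (fun m hm => mem_range.mp (hs.1 (mem_inter.mp hm).1)) := by
      ext a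
      rw [mem_inter, mem_attachFin, mem_inter, toVert_mem hs, toVert_mem ht]
    rw [hint, card_attachFin]
    exact h.2

lemma toVert_surj {n k : ℕ} {hk : k ≤ n} (v : {x : Finset (Fin n) // x.card = k}) :
    ∃ s : Finset ℕ, (s ⊆ range n ∧ s.card = k) ∧ toVert n k hk s = v := by
  refine ⟨v.1.map ⟨Fin.val, Fin.val_injective⟩, ⟨?_, ?_⟩, ?_⟩
  · intro x hx
    simp only [mem_map, Function.Embedding.coeFn_mk] at hx
    obtain ⟨a, -, rfl⟩ := hx
    exact mem_range.mpr a.isLt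
  · rw [card_map]; exact v.2
  · apply Subtype.ext
    ext a
    rw [toVert_mem ⟨by
      intro x hx
      simp only [mem_map, Function.Embedding.coeFn_mk] at hx
      obtain ⟨b, -, rfl⟩ := hx
      exact mem_range.mpr b.isLt, by rw [card_map]; exact v.2⟩]
    simp only [mem_map, Function.Embedding.coeFn_mk]
    constructor
    · rintro ⟨b, hb, hba⟩
      rwa [Fin.val_injective hba] at hb
    · intro ha
      exact ⟨a, ha, rfl⟩

theorem stmt_10' (n k : ℕ) (hn : 3 ≤ n) (hk1 : 1 ≤ k) (hk2 : k ≤ n - 1) :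
    (johnsonGraph n k).IsHamiltonian := by
  have hkn : k ≤ n := by omega
  set L := (RD n k).map (toVert n k hkn) with hL
  apply ham_of_list' L
  · apply List.Nodup.map_on ?_ (RD_nodup n k)
    intro x hx y hy hxy
    exact toVert_inj (mem_RD hx) (mem_RD hy) hxy
  · intro v
    obtain ⟨s, hs, rfl⟩ := toVert_surj (hk := hkn) v
    exact List.mem_map_of_mem (RD_complete hs.1 hs.2)
  · rw [hL, List.length_map, RD_length]
    have := le_choose n k hk1 hk2
    omega
  · simp only [hL, List.Chain', List.isChain_map]
    apply chain'_imp_mem (RD_chain n k)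
    intro x hx y hy hxy
    exact toVert_adj (mem_RD hx) (mem_RD hy) hxy
  · intro x hx y hy
    rw [hL, List.head?_map, RD_head hkn] at hx
    rw [hL, List.getLast?_map, RD_getLast hk1 hkn] at hy
    simp only [Option.map_some, Option.mem_def, Option.some_inj] at hx hy
    subst hx; subst hy
    have h1 : range k ⊆ range n ∧ (range k).card = k :=
      ⟨range_subset_range.mpr hkn, card_range k⟩
    have h2 : insert (n-1) (range (k-1)) ⊆ range n ∧ (insert (n-1) (range (k-1))).card = k := by
      constructor
      · intro x hx
        simp only [mem_insert, mem_range] at hx ⊢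
        omega
      · rw [card_insert_of_notMem (by simp only [mem_range]; omega), card_range]
        omega
    exact toVert_adj h1 h2 (RD_cyc hk1 hk2 (by omega))

/-- For `n ≥ 3` and `1 ≤ k ≤ n-1`, the Johnson graph `J(n,k)` is Hamiltonian. -/
theorem stmt_10 (n k : ℕ) (hn : 3 ≤ n) (hk1 : 1 ≤ k) (hk2 : k ≤ n - 1) :
    (johnsonGraph n k).IsHamiltonian := stmt_10' n k hn hk1 hk2
end

section
/- For n ≥ 4, the 2-token graph F_n^{(2)} contains a Hamiltonian cycle in which the vertices {n−2, n−1} and {n−2, n} are adjacent along the cycle. -/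
open Finset SimpleGraph

open List

namespace TokenFan


variable {V : Type*}

/-- consecutive pairs of a list, as `Sym2`s. -/
def pairs : List V → List (Sym2 V)
  | [] => []
  | [_] => []
  | x :: y :: t => s(x, y) :: pairs (y :: t)

@[simp] lemma pairs_nil : pairs ([] : List V) = [] := rfl
@[simp] lemma pairs_single (x : V) : pairs [x] = [] := rfl
@[simp] lemma pairs_cons_cons (x y : V) (t : List V) :
    pairs (x :: y :: t) = s(x, y) :: pairs (y :: t) := rfl

lemma mem_pairs_cons {e : Sym2 V} {L : List V} (d : V) (h : e ∈ pairs L) :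
    e ∈ pairs (d :: L) := by
  match L with
  | [] => simp at h
  | [x] => simp at h
  | x :: y :: t => simp only [pairs_cons_cons] at h ⊢; exact List.mem_cons_of_mem _ h

lemma pairs_mem_of_split (x y : V) (l1 l2 : List V) :
    s(x, y) ∈ pairs (l1 ++ x :: y :: l2) := by
  induction l1 with
  | nil => simp
  | cons d t ih => exact mem_pairs_cons d ih

lemma not_mem_pairs (a b c : V) (hbc : b ≠ c) :
    ∀ L : List V, a ∉ L → a ≠ c → s(a, b) ∉ pairs (L ++ [c, a]) := by
  intro L
  induction L with
  | nil =>
    intro _ hac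
    simp only [List.nil_append, pairs_cons_cons, pairs_single, List.mem_singleton,
      List.not_mem_nil, List.mem_cons, Sym2.eq_iff]
    rintro ((⟨h1, h2⟩ | ⟨h1, h2⟩) | h)
    · exact hac h1
    · exact hbc h2
    · exact h
  | cons d t ih =>
    intro haL hac
    have hat : a ∉ t := fun h => haL (List.mem_cons_of_mem _ h)
    have had : a ≠ d := fun h => haL (h ▸ List.mem_cons_self)
    rw [List.cons_append]
    match ht : t with
    | [] =>
      simp only [List.nil_append, pairs_cons_cons, pairs_single, List.mem_cons,
        List.mem_singleton, List.not_mem_nil, Sym2.eq_iff]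
      rintro ((⟨h1, h2⟩ | ⟨h1, h2⟩) | (⟨h1, h2⟩ | ⟨h1, h2⟩) | h)
      · exact had h1
      · exact hac h1
      · exact hac h1
      · exact hbc h2
      · exact h
    | e :: t' =>
      rw [List.cons_append, pairs_cons_cons]
      intro hmem
      rcases List.mem_cons.mp hmem with h | h
      · rcases Sym2.eq_iff.mp h with ⟨h1, _⟩ | ⟨h1, _⟩
        · exact had h1
        · exact hat (h1 ▸ List.mem_cons_self)
      · rw [← List.cons_append] at h
        exact ih hat hac h

variable (G : SimpleGraph V)

/-- Build a walk from a chain of adjacent vertices. -/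
def buildWalk : (a : V) → (l : List V) → (b : V) → List.Chain G.Adj a (l ++ [b]) → G.Walk a b
  | _, [], _, h => Walk.cons (List.chain_cons.mp h).1 Walk.nil
  | _, c :: l, b, h =>
    Walk.cons (List.chain_cons.mp h).1 (buildWalk c l b (List.chain_cons.mp h).2)

lemma buildWalk_cons (a c : V) (l : List V) (b : V) (h) :
    buildWalk G a (c :: l) b h =
      Walk.cons (List.chain_cons.mp h).1 (buildWalk G c l b (List.chain_cons.mp h).2) := rfl

lemma buildWalk_support : ∀ (a : V) (l : List V) (b : V) (h),
    (buildWalk G a l b h).support = a :: (l ++ [b])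
  | _, [], _, _ => rfl
  | a, c :: l, b, h => by
    erw [buildWalk_cons, Walk.support_cons, buildWalk_support]
    simp

lemma buildWalk_edges : ∀ (a : V) (l : List V) (b : V) (h),
    (buildWalk G a l b h).edges = pairs (a :: (l ++ [b]))
  | _, [], _, _ => rfl
  | a, c :: l, b, h => by
    erw [buildWalk_cons, Walk.edges_cons, buildWalk_edges]
    simp


variable (n : ℕ) (hn : 4 ≤ n)

def fv (a : ℕ) : Fin n := ⟨a % n, Nat.mod_lt _ (by omega)⟩
lemma fv_eq {a : ℕ} (ha : a < n) : fv n hn a = ⟨a, ha⟩ := Fin.ext (Nat.mod_eq_of_lt ha)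
def pv (a b : ℕ) : {s : Finset (Fin n) // s.card = 2} :=
  if h : fv n hn a = fv n hn b then
    ⟨{fv n hn 0, fv n hn 1}, Finset.card_pair (by
      rw [fv_eq n hn (by omega : (0:ℕ) < n), fv_eq n hn (by omega : (1:ℕ) < n)]
      simp [Fin.ext_iff])⟩
  else ⟨{fv n hn a, fv n hn b}, Finset.card_pair h⟩
lemma pv_val {a b : ℕ} (ha : a < n) (hb : b < n) (hab : a ≠ b) :
    (pv n hn a b).1 = {⟨a, ha⟩, ⟨b, hb⟩} := by
  rw [pv, dif_neg (by rw [fv_eq n hn ha, fv_eq n hn hb]; simp [Fin.ext_iff, hab])]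
  show ({fv n hn a, fv n hn b} : Finset (Fin n)) = _
  rw [fv_eq n hn ha, fv_eq n hn hb]
lemma pv_comm (a b : ℕ) : pv n hn a b = pv n hn b a := by
  unfold pv
  by_cases h : fv n hn a = fv n hn b
  · rw [dif_pos h, dif_pos h.symm]
  · rw [dif_neg h, dif_neg (Ne.symm h)]
    exact Subtype.ext (Finset.pair_comm _ _)
lemma pv_inj {a b a' b' : ℕ} (h1 : a < b) (h2 : b < n) (h3 : a' < b') (h4 : b' < n)
    (h : pv n hn a b = pv n hn a' b') : a = a' ∧ b = b' := by
  have := congrArg Subtype.val h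
  rw [pv_val n hn (by omega) h2 (by omega), pv_val n hn (by omega) h4 (by omega)] at this
  rw [Finset.ext_iff] at this
  have e1 := this ⟨a, by omega⟩
  have e2 := this ⟨b, h2⟩
  have e3 := this ⟨a', by omega⟩
  simp [Fin.ext_iff] at e1 e2 e3
  omega
lemma fan_adj {a b : ℕ} (ha : a < n) (hb : b < n) (hab : a ≠ b)
    (h : (a + 1 = b ∧ b < n - 1) ∨ b = n - 1 ∨ (b + 1 = a ∧ a < n - 1) ∨ a = n - 1) :
    (fanGraph n).Adj ⟨a, ha⟩ ⟨b, hb⟩ := by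
  rw [fanGraph, fromRel_adj]
  refine ⟨by simp [Fin.ext_iff, hab], ?_⟩
  simp only [Fin.ext_iff]
  omega
lemma tok_adj {a b c : ℕ} (ha : a < n) (hb : b < n) (hc : c < n)
    (hab : a ≠ b) (hac : a ≠ c) (hbc : b ≠ c)
    (h : (a + 1 = b ∧ b < n - 1) ∨ b = n - 1 ∨ (b + 1 = a ∧ a < n - 1) ∨ a = n - 1) :
    (tokenGraph (fanGraph n) 2).Adj (pv n hn c a) (pv n hn c b) := by
  refine ⟨⟨a, ha⟩, ⟨b, hb⟩, fan_adj n ha hb hab h, ?_⟩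
  rw [pv_val n hn hc ha (Ne.symm hac), pv_val n hn hc hb (Ne.symm hbc)]
  ext x
  simp only [symmDiff_def, Finset.sup_eq_union, Finset.mem_union, Finset.mem_sdiff,
    Finset.mem_insert, Finset.mem_singleton, Fin.ext_iff]
  omega

/-! ### the lists -/

def rowL (i : ℕ) : List (ℕ × ℕ) := (List.range' 0 (n - 1 - i)).map (fun t => (i, n - 1 - t))
def BL : List (ℕ × ℕ) := (List.range' 1 (n - 3)).flatMap (rowL n)
def DL : List (ℕ × ℕ) := (List.range' 0 (n - 3)).map (fun t => (0, n - 2 - t))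
def restL : List (ℕ × ℕ) := (0, n-1) :: (BL n ++ [(n-2, n-1)] ++ DL n)
def fullL : List (ℕ × ℕ) := (0,1) :: restL n

lemma mem_rowL {i : ℕ} {q : ℕ × ℕ} : q ∈ rowL n i ↔ q.1 = i ∧ i + 1 ≤ q.2 ∧ q.2 ≤ n - 1 := by
  obtain ⟨q1, q2⟩ := q
  simp only [rowL, List.mem_map, List.mem_range'_1, Prod.mk.injEq]
  constructor
  · rintro ⟨t, ⟨_, ht⟩, rfl, rfl⟩; omega
  · rintro ⟨rfl, h1, h2⟩
    exact ⟨n - 1 - q2, by omega, rfl, by omega⟩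

lemma mem_BL {q : ℕ × ℕ} : q ∈ BL n ↔ 1 ≤ q.1 ∧ q.1 ≤ n - 3 ∧ q.1 < q.2 ∧ q.2 ≤ n - 1 := by
  simp only [BL, List.mem_flatMap, mem_rowL, List.mem_range'_1]
  constructor
  · rintro ⟨i, ⟨h1, h2⟩, rfl, h3, h4⟩; omega
  · rintro ⟨h1, h2, h3, h4⟩
    exact ⟨q.1, by omega, rfl, by omega, h4⟩

lemma mem_DL {q : ℕ × ℕ} : q ∈ DL n ↔ q.1 = 0 ∧ 2 ≤ q.2 ∧ q.2 ≤ n - 2 := by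
  obtain ⟨q1, q2⟩ := q
  simp only [DL, List.mem_map, List.mem_range'_1, Prod.mk.injEq]
  constructor
  · rintro ⟨t, ⟨_, ht⟩, rfl, rfl⟩; omega
  · rintro ⟨rfl, h1, h2⟩
    exact ⟨n - 2 - q2, by omega, rfl, by omega⟩

lemma nodup_rowL (i : ℕ) : (rowL n i).Nodup := by
  refine List.Nodup.map_on ?_ List.nodup_range'
  intro x hx y hy h
  simp only [List.mem_range'_1] at hx hy
  simp only [Prod.mk.injEq] at h
  omega

lemma nodup_DL : (DL n).Nodup := by
  refine List.Nodup.map_on ?_ List.nodup_range'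
  intro x hx y hy h
  simp only [List.mem_range'_1] at hx hy
  simp only [Prod.mk.injEq] at h
  omega

lemma nodup_BL : (BL n).Nodup := by
  rw [BL, List.flatMap_def, List.nodup_flatten]
  constructor
  · intro l hl
    rw [List.mem_map] at hl
    obtain ⟨i, _, rfl⟩ := hl
    exact nodup_rowL n i
  · rw [List.pairwise_map]
    refine List.Pairwise.imp ?_ List.nodup_range'
    intro i j hij
    intro q hq hq'
    rw [mem_rowL] at hq hq'
    omega

lemma mem_fullL {a b : ℕ} (h1 : a < b) (h2 : b < n) : (a, b) ∈ fullL n := by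
  simp only [fullL, restL, List.mem_cons, List.mem_append, mem_BL, mem_DL,
    List.mem_singleton, Prod.mk.injEq]
  omega

lemma good_of_mem_fullL (hn : 4 ≤ n) {q : ℕ × ℕ} (h : q ∈ fullL n) : q.1 < q.2 ∧ q.2 ≤ n - 1 := by
  obtain ⟨q1, q2⟩ := q
  simp only [fullL, restL, List.mem_cons, List.mem_append, mem_BL, mem_DL,
    List.mem_singleton, List.not_mem_nil, Prod.mk.injEq, or_false, false_or, true_and, and_true] at h
  show q1 < q2 ∧ q2 ≤ n - 1
  omega

lemma nodup_fullL (hn : 4 ≤ n) : (fullL n).Nodup := by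
  rw [fullL, restL]
  rw [List.nodup_cons, List.nodup_cons, List.nodup_append, List.nodup_append]
  refine ⟨?_, ?_, ⟨nodup_BL n, by simp, ?_⟩, nodup_DL n, ?_⟩
  · simp only [List.mem_cons, List.mem_append, mem_BL, mem_DL, List.mem_singleton, List.not_mem_nil,
      Prod.mk.injEq, true_and, and_true, or_false, false_or]
    omega
  · simp only [List.mem_append, mem_BL, mem_DL, List.mem_singleton, List.not_mem_nil, Prod.mk.injEq, true_and, and_true, or_false, false_or]
    omega
  · rintro ⟨q1, q2⟩ hq ⟨b1, b2⟩ hb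
    rw [mem_BL] at hq
    rw [List.mem_singleton] at hb
    simp only [ne_eq, Prod.mk.injEq] at hq hb ⊢
    omega
  · rintro ⟨q1, q2⟩ hq ⟨b1, b2⟩ hb
    rw [List.mem_append, mem_BL, List.mem_singleton] at hq
    rw [mem_DL] at hb
    simp only [ne_eq, Prod.mk.injEq] at hq hb ⊢
    omega

/-! ### chains -/

lemma chain'_map_range' {α : Type*} (R : α → α → Prop) (g : ℕ → α) :
    ∀ (m s : ℕ), (∀ t, s ≤ t → t + 1 < s + m → R (g t) (g (t + 1))) →
      List.Chain' R ((List.range' s m).map g) := by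
  intro m
  induction m with
  | zero => intro _ _; exact List.isChain_nil
  | succ m ih =>
    intro s h
    rw [List.range'_succ, List.map_cons]
    refine List.isChain_cons.mpr ⟨?_, ih (s + 1) (fun t ht ht' => h t (by omega) (by omega))⟩
    intro y hy
    match m, hy with
    | m + 1, hy =>
      rw [List.range'_succ, List.map_cons, List.head?_cons, Option.mem_some_iff] at hy
      subst hy
      exact h s le_rfl (by omega)

def Radj (q r : ℕ × ℕ) : Prop :=
  (tokenGraph (fanGraph n) 2).Adj (pv n hn q.1 q.2) (pv n hn r.1 r.2)

lemma chain'_rowL (i : ℕ) : List.Chain' (Radj n hn) (rowL n i) := by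
  refine chain'_map_range' _ _ _ _ ?_
  intro t ht ht'
  show (tokenGraph (fanGraph n) 2).Adj (pv n hn i (n - 1 - t)) (pv n hn i (n - 1 - (t + 1)))
  exact tok_adj n hn (by omega) (by omega) (by omega) (by omega) (by omega) (by omega) (by omega)

lemma rowL_ne_nil (i : ℕ) (h : i + 2 ≤ n) : rowL n i ≠ [] := by
  rw [rowL, ← List.length_pos_iff_ne_nil, List.length_map, List.length_range']
  omega

lemma head?_rowL (i : ℕ) (h : i + 2 ≤ n) : (rowL n i).head? = some (i, n - 1) := by
  rw [rowL, List.head?_map, List.head?_range', if_neg (by omega)]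
  rfl

lemma getLast?_rowL (i : ℕ) (h : i + 2 ≤ n) : (rowL n i).getLast? = some (i, i + 1) := by
  rw [rowL, List.getLast?_map, List.getLast?_range', if_neg (by omega)]
  simp
  omega

lemma chainB (hn4 : 4 ≤ n) : ∀ (k i : ℕ), 1 ≤ k → 1 ≤ i → i + k = n - 2 →
    List.Chain' (Radj n hn) ((List.range' i k).flatMap (rowL n) ++ [(n-2, n-1)]) ∧
    ((List.range' i k).flatMap (rowL n) ++ [(n-2, n-1)]).head? = some (i, n - 1) := by
  intro k
  induction k with
  | zero => omega
  | succ k ih =>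
    intro i hk hi hik
    have hne : rowL n i ≠ [] := rowL_ne_nil n i (by omega)
    rw [List.range'_succ, List.flatMap_cons, List.append_assoc]
    constructor
    case right =>
      rw [List.head?_append_of_ne_nil _ hne, head?_rowL n i (by omega)]
    rcases Nat.eq_zero_or_pos k with rfl | hk1
    · -- i = n - 3, no more rows
      simp only [List.range'_zero, List.flatMap_nil, List.nil_append]
      refine List.IsChain.append (chain'_rowL n hn i) (List.isChain_singleton _) ?_
      intro x hx y hy
      rw [getLast?_rowL n i (by omega), Option.mem_some_iff] at hx
      rw [List.head?_cons, Option.mem_some_iff] at hy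
      subst hx; subst hy
      show (tokenGraph (fanGraph n) 2).Adj (pv n hn i (i+1)) (pv n hn (n-2) (n-1))
      have hi2 : i = n - 3 := by omega
      rw [pv_comm, hi2]
      have h1 : n - 3 + 1 = n - 2 := by omega
      rw [h1]
      exact tok_adj n hn (by omega) (by omega) (by omega) (by omega) (by omega) (by omega) (by omega)
    · have := ih (i + 1) hk1 (by omega) (by omega)
      refine List.IsChain.append (chain'_rowL n hn i) this.1 ?_
      intro x hx y hy
      rw [getLast?_rowL n i (by omega), Option.mem_some_iff] at hx
      rw [this.2, Option.mem_some_iff] at hy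
      subst hx; subst hy
      show (tokenGraph (fanGraph n) 2).Adj (pv n hn i (i+1)) (pv n hn (i+1) (n-1))
      rw [pv_comm]
      exact tok_adj n hn (by omega) (by omega) (by omega) (by omega) (by omega) (by omega) (by omega)

lemma chain'_DL : List.Chain' (Radj n hn) (DL n) := by
  refine chain'_map_range' _ _ _ _ ?_
  intro t ht ht'
  show (tokenGraph (fanGraph n) 2).Adj (pv n hn 0 (n - 2 - t)) (pv n hn 0 (n - 2 - (t + 1)))
  exact tok_adj n hn (by omega) (by omega) (by omega) (by omega) (by omega) (by omega) (by omega)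

lemma DL_ne_nil (hn4 : 4 ≤ n) : DL n ≠ [] := by
  rw [DL, ← List.length_pos_iff_ne_nil, List.length_map, List.length_range']
  omega

lemma head?_DL (hn4 : 4 ≤ n) : (DL n).head? = some (0, n - 2) := by
  rw [DL, List.head?_map, List.head?_range', if_neg (by omega)]
  rfl

lemma getLast?_DL (hn4 : 4 ≤ n) : (DL n).getLast? = some (0, 2) := by
  rw [DL, List.getLast?_map, List.getLast?_range', if_neg (by omega)]
  simp
  omega

lemma chain_full (hn4 : 4 ≤ n) : List.Chain' (Radj n hn) (fullL n ++ [(0, 1)]) := by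
  have hsplit : fullL n ++ [(0,1)] =
      [(0,1), (0,n-1)] ++ ((BL n ++ [(n-2,n-1)]) ++ (DL n ++ [(0,1)])) := by
    simp [fullL, restL]
  rw [hsplit]
  have hB := chainB n hn hn4 (n - 3) 1 (by omega) le_rfl (by omega)
  rw [show (List.range' 1 (n-3)).flatMap (rowL n) = BL n from rfl] at hB
  refine List.IsChain.append ?_ (List.IsChain.append hB.1 ?_ ?_) ?_
  · refine List.isChain_pair.mpr ?_
    show (tokenGraph (fanGraph n) 2).Adj (pv n hn 0 1) (pv n hn 0 (n-1))
    exact tok_adj n hn (by omega) (by omega) (by omega) (by omega) (by omega) (by omega) (by omega)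
  · refine List.IsChain.append (chain'_DL n hn) (List.isChain_singleton _) ?_
    intro x hx y hy
    rw [getLast?_DL n hn4, Option.mem_some_iff] at hx
    rw [List.head?_cons, Option.mem_some_iff] at hy
    subst hx; subst hy
    show (tokenGraph (fanGraph n) 2).Adj (pv n hn 0 2) (pv n hn 0 1)
    exact tok_adj n hn (by omega) (by omega) (by omega) (by omega) (by omega) (by omega) (by omega)
  · intro x hx y hy
    rw [List.getLast?_concat, Option.mem_some_iff] at hx
    rw [List.head?_append_of_ne_nil _ (DL_ne_nil n hn4), head?_DL n hn4,
      Option.mem_some_iff] at hy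
    subst hx; subst hy
    show (tokenGraph (fanGraph n) 2).Adj (pv n hn (n-2) (n-1)) (pv n hn 0 (n-2))
    rw [pv_comm n hn 0 (n-2)]
    exact tok_adj n hn (by omega) (by omega) (by omega) (by omega) (by omega) (by omega) (by omega)
  · intro x hx y hy
    have : [((0:ℕ),(1:ℕ)), (0, n-1)].getLast? = some (0, n-1) := rfl
    rw [this, Option.mem_some_iff] at hx
    rw [List.head?_append_of_ne_nil _ (by simp), hB.2, Option.mem_some_iff] at hy
    subst hx; subst hy
    show (tokenGraph (fanGraph n) 2).Adj (pv n hn 0 (n-1)) (pv n hn 1 (n-1))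
    rw [pv_comm n hn 0 (n-1), pv_comm n hn 1 (n-1)]
    exact tok_adj n hn (by omega) (by omega) (by omega) (by omega) (by omega) (by omega) (by omega)

/-! ### assembly -/

def fpv (q : ℕ × ℕ) : {s : Finset (Fin n) // s.card = 2} := pv n hn q.1 q.2

@[simp] lemma fpv_pair (a b : ℕ) : fpv n hn (a, b) = pv n hn a b := rfl

lemma coverage (v : {s : Finset (Fin n) // s.card = 2}) :
    v ∈ (fullL n).map (fpv n hn) := by
  obtain ⟨s, hs⟩ := v
  obtain ⟨x, y, hxy, rfl⟩ := Finset.card_eq_two.mp hs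
  have hxy' : x.val ≠ y.val := fun h => hxy (Fin.ext h)
  rcases Nat.lt_or_ge x.val y.val with h | h
  · refine List.mem_map.mpr ⟨(x.val, y.val), mem_fullL n h y.isLt, ?_⟩
    rw [fpv_pair]
    refine Subtype.ext ?_
    rw [pv_val n hn x.isLt y.isLt (by omega)]
  · have h' : y.val < x.val := by omega
    refine List.mem_map.mpr ⟨(y.val, x.val), mem_fullL n h' x.isLt, ?_⟩
    rw [fpv_pair]
    refine Subtype.ext ?_
    rw [pv_val n hn y.isLt x.isLt (by omega)]
    simp [Finset.pair_comm]

lemma fpv_inj_on (hn4 : 4 ≤ n) : ∀ q ∈ fullL n, ∀ r ∈ fullL n,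
    fpv n hn q = fpv n hn r → q = r := by
  intro q hq r hr h
  have hq' := good_of_mem_fullL n hn4 hq
  have hr' := good_of_mem_fullL n hn4 hr
  have := pv_inj n hn hq'.1 (by omega) hr'.1 (by omega) h
  exact Prod.ext this.1 this.2

lemma nodup_map_fullL (hn4 : 4 ≤ n) : ((fullL n).map (fpv n hn)).Nodup :=
  (nodup_fullL n hn4).map_on (fpv_inj_on n hn hn4)

lemma pv_ne (a b a' b' : ℕ) (h1 : a < b) (h2 : b < n) (h3 : a' < b') (h4 : b' < n)
    (hne : a ≠ a' ∨ b ≠ b') : pv n hn a b ≠ pv n hn a' b' := by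
  intro h
  have := pv_inj n hn h1 h2 h3 h4 h
  omega

end TokenFan

open TokenFan

/-- For `n ≥ 4`, `F_n^{(2)}` has a Hamiltonian cycle in which the vertices
`{n-2, n-1}` and `{n-2, n}` (0-indexed: `{n-3, n-2}` and `{n-3, n-1}`) are
adjacent along the cycle. -/
theorem stmt_18 (n : ℕ) (hn : 4 ≤ n) :
    ∃ (X Y : {s : Finset (Fin n) // s.card = 2}),
      X.1 = Finset.univ.filter (fun x : Fin n => x.val = n - 3 ∨ x.val = n - 2) ∧
      Y.1 = Finset.univ.filter (fun x : Fin n => x.val = n - 3 ∨ x.val = n - 1) ∧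
      ∃ p : (tokenGraph (fanGraph n) 2).Walk X X,
        p.IsHamiltonianCycle ∧ s(X, Y) ∈ p.edges := by
  classical
  set G := tokenGraph (fanGraph n) 2 with hG
  set f : ℕ × ℕ → {s : Finset (Fin n) // s.card = 2} := fpv n hn with hf
  -- the chain
  have hc0 : List.Chain' (Radj n hn) (fullL n ++ [(0, 1)]) := chain_full n hn hn
  rw [fullL, List.cons_append] at hc0
  have hc1 : List.Chain (Radj n hn) (0, 1) (restL n ++ [(0, 1)]) := hc0
  have hc2 : List.Chain G.Adj (f (0, 1)) ((restL n ++ [(0, 1)]).map f) :=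
    (List.isChain_map (R := G.Adj) f (l := (0, 1) :: (restL n ++ [(0, 1)]))).mpr hc1
  rw [List.map_append] at hc2
  -- the closed walk
  have hc2' : List.Chain G.Adj (f (0, 1))
      ((f (0, n-1) :: ((BL n ++ [(n-2,n-1)] ++ DL n).map f)) ++ [f (0, 1)]) := hc2
  let p0 : G.Walk (f (0, 1)) (f (0, 1)) :=
    buildWalk G (f (0, 1)) (f (0, n-1) :: ((BL n ++ [(n-2,n-1)] ++ DL n).map f)) (f (0, 1)) hc2'
  have hsupp : p0.support = f (0, 1) :: ((restL n).map f ++ [f (0, 1)]) :=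
    buildWalk_support G _ _ _ _
  have htail : ((restL n).map f ++ [f (0, 1)]) = ((restL n ++ [(0,1)]).map f) := by
    rw [List.map_append]; rfl
  have hperm : ((restL n ++ [(0,1)]).map f).Perm ((fullL n).map f) := by
    rw [fullL]
    exact List.Perm.map f (List.perm_append_singleton _ _)
  have hndtail : ((restL n).map f ++ [f (0, 1)]).Nodup := by
    rw [htail]
    exact hperm.nodup_iff.mpr (nodup_map_fullL n hn hn)
  -- count of each vertex in the support tail is 1
  have hcount : ∀ v, (p0.support.tail.count v) = 1 := by
    intro v
    rw [hsupp]
    show (((restL n).map f ++ [f (0,1)]).count v) = 1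
    rw [htail, hperm.count_eq]
    exact List.count_eq_one_of_mem (nodup_map_fullL n hn hn) (coverage n hn v)
  -- cycle property
  have hcyc : p0.IsCycle := by
    show (buildWalk G (f (0, 1)) (f (0, n-1) :: ((BL n ++ [(n-2,n-1)] ++ DL n).map f))
      (f (0, 1)) hc2').IsCycle
    rw [buildWalk_cons]
    rw [SimpleGraph.Walk.cons_isCycle_iff]
    constructor
    · refine SimpleGraph.Walk.IsPath.mk' ?_
      erw [buildWalk_support]
      exact hndtail
    · erw [buildWalk_edges]
      -- list has the form L ++ [f (0,2), f (0,1)]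
      have hDL : DL n = (List.range' 0 (n-4)).map (fun t => (0, n - 2 - t)) ++ [(0, 2)] := by
        rw [DL, show n - 3 = n - 4 + 1 by omega, ← List.range'_append_1 (s := 0) (m := n-4) (n := 1)]
        rw [List.map_append]
        congr 1
        show [((0:ℕ), n - 2 - (0 + (n-4)))] = [(0, 2)]
        have : n - 2 - (0 + (n - 4)) = 2 := by omega
        rw [this]
      have hshape : f (0, n-1) :: ((BL n ++ [(n-2,n-1)] ++ DL n).map f ++ [f (0,1)])
          = (f (0, n-1) :: ((BL n ++ [(n-2,n-1)]
              ++ (List.range' 0 (n-4)).map (fun t => ((0:ℕ), n - 2 - t))).map f))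
            ++ [f (0, 2), f (0, 1)] := by
        rw [hDL]
        simp [List.append_assoc]
      rw [hshape]
      apply not_mem_pairs
      · -- f (0, n-1) ≠ f (0, 2)
        exact pv_ne n hn 0 (n-1) 0 2 (by omega) (by omega) (by omega) (by omega) (by omega)
      · -- f (0,1) not in the prefix
        intro hmem
        have hndX : ((f (0, n-1) :: ((BL n ++ [(n-2,n-1)] ++ DL n).map f ++ [f (0,1)]))).Nodup :=
          hndtail
        rw [hshape, List.nodup_append] at hndX
        exact hndX.2.2 _ hmem _ (by simp) rfl
      · exact pv_ne n hn 0 1 0 2 (by omega) (by omega) (by omega) (by omega) (by omega)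
  have hham : p0.IsHamiltonianCycle := by
    rw [SimpleGraph.Walk.isHamiltonianCycle_iff_isCycle_and_support_count_tail_eq_one]
    exact ⟨hcyc, fun v => by convert hcount v using 2; exact lawful_beq_subsingleton _ _⟩
  -- the distinguished edge
  have hedge : s(f (n-3, n-2), f (n-3, n-1)) ∈ p0.edges := by
    have hedges : p0.edges = pairs (f (0,1) :: ((restL n).map f ++ [f (0,1)])) :=
      buildWalk_edges G _ _ _ _
    have hBLsplit : BL n = (List.range' 1 (n-4)).flatMap (rowL n)
        ++ [(n-3, n-1), (n-3, n-2)] := by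
      rw [BL, show n - 3 = n - 4 + 1 by omega, ← List.range'_append_1 (s := 1) (m := n-4) (n := 1),
        List.flatMap_append]
      congr 1
      rw [List.range'_one, List.flatMap_singleton, show 1 + (n - 4) = n - 3 by omega, show n - 4 + 1 = n - 3 by omega,
        rowL, show n - 1 - (n-3) = 2 by omega]
      show [((n:ℕ)-3, n - 1 - 0), (n-3, n - 1 - 1)] = [(n-3, n-1), (n-3, n-2)]
      have h1 : n - 1 - 0 = n - 1 := by omega
      have h2 : n - 1 - 1 = n - 2 := by omega
      rw [h1, h2]
    have hsplitrest : (restL n).map f = f (0, n-1) :: ((BL n ++ [(n-2,n-1)] ++ DL n).map f) := rfl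
    have hshape2 : f (0,1) :: ((restL n).map f ++ [f (0,1)])
        = (f (0,1) :: f (0, n-1) :: ((List.range' 1 (n-4)).flatMap (rowL n)).map f)
          ++ f (n-3, n-1) :: f (n-3, n-2)
          :: (([((n:ℕ)-2, n-1)] ++ DL n).map f ++ [f (0,1)]) := by
      rw [hsplitrest, hBLsplit]
      simp [List.append_assoc]
    rw [hedges, hshape2, Sym2.eq_swap]
    exact pairs_mem_of_split _ _ _ _
  -- rotate so the cycle starts at X
  have hXmem : f (n-3, n-2) ∈ p0.support := by
    rw [hsupp]
    refine List.mem_cons_of_mem _ ?_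
    rw [htail]
    exact hperm.mem_iff.mpr (coverage n hn (f (n-3, n-2)))
  refine ⟨f (n-3, n-2), f (n-3, n-1), ?_, ?_, p0.rotate _ hXmem, ?_, ?_⟩
  · show (pv n hn (n-3) (n-2)).1 = _
    rw [pv_val n hn (by omega) (by omega) (by omega)]
    ext x
    simp only [Finset.mem_insert, Finset.mem_singleton, Finset.mem_filter,
      Finset.mem_univ, true_and, Fin.ext_iff]
  · show (pv n hn (n-3) (n-1)).1 = _
    rw [pv_val n hn (by omega) (by omega) (by omega)]
    ext x
    simp only [Finset.mem_insert, Finset.mem_singleton, Finset.mem_filter,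
      Finset.mem_univ, true_and, Fin.ext_iff]
  · -- rotated walk is a hamiltonian cycle
    rw [SimpleGraph.Walk.isHamiltonianCycle_iff_isCycle_and_support_count_tail_eq_one]
    refine ⟨hcyc.rotate hXmem, ?_⟩
    intro v
    convert hcount v using 1
    convert (SimpleGraph.Walk.support_rotate p0 _ hXmem).perm.count_eq v using 2
    exact lawful_beq_subsingleton _ _
  · rw [(SimpleGraph.Walk.rotate_edges p0 _ hXmem).mem_iff]
    exact hedge
end
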